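/- Let n ≥ 4 and define h(x) = (1+|x|²)^{-(2n-5)/2} and σ(x) = (1+|x|²)^{(n-3)/2} on ℝⁿ. Then σ(x)·div(h(x)∇σ(x)) ≥ 0 for all x ∈ ℝⁿ. -/

import Mathlib

open Real

/-- The partial derivative of `f` in the `i`-th coordinate direction. -/
noncomputable def pderiv' {n : ℕ} (f : EuclideanSpace ℝ (Fin n) → ℝ)
    (i : Fin n) (x : EuclideanSpace ℝ (Fin n)) : ℝ :=
  fderiv ℝ f x (EuclideanSpace.single i (1 : ℝ))


variable {n : ℕ}

lemma gpos (x : EuclideanSpace ℝ (Fin n)) : (0:ℝ) < 1 + ‖x‖^2 := by positivity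

lemma hasFDerivAt_one_add_normsq_rpow (p : ℝ) (x : EuclideanSpace ℝ (Fin n)) :
    HasFDerivAt (fun y : EuclideanSpace ℝ (Fin n) => (1 + ‖y‖ ^ 2) ^ p)
      ((p * (1 + ‖x‖ ^ 2) ^ (p - 1)) • ((2:ℕ) • (innerSL ℝ x))) x := by
  have h1 : HasFDerivAt (fun y : EuclideanSpace ℝ (Fin n) => 1 + ‖y‖ ^ 2)
      ((2:ℕ) • (innerSL ℝ x)) x := by
    simpa using ((hasStrictFDerivAt_norm_sq x).hasFDerivAt).const_add 1
  have h2 : HasDerivAt (fun t : ℝ => t ^ p)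
      (p * (1 + ‖x‖ ^ 2) ^ (p - 1)) (1 + ‖x‖ ^ 2) := by
    simpa [mul_comm] using Real.hasDerivAt_rpow_const (p := p) (Or.inl (gpos x).ne')
  exact h2.comp_hasFDerivAt x h1

lemma eval_single (x : EuclideanSpace ℝ (Fin n)) (i : Fin n) :
    (innerSL ℝ x) (EuclideanSpace.single i (1:ℝ)) = x i := by
  simp [EuclideanSpace.inner_single_right]

lemma pderiv_pow (p : ℝ) (i : Fin n) (x : EuclideanSpace ℝ (Fin n)) :
    pderiv' (fun y => (1 + ‖y‖ ^ 2) ^ p) i x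
      = p * (1 + ‖x‖ ^ 2) ^ (p - 1) * (2 * x i) := by
  rw [pderiv', (hasFDerivAt_one_add_normsq_rpow p x).fderiv]
  simp [eval_single]

lemma hasFDerivAt_F (q : ℝ) (i : Fin n) (x : EuclideanSpace ℝ (Fin n)) :
    HasFDerivAt (fun y : EuclideanSpace ℝ (Fin n) => (1 + ‖y‖ ^ 2) ^ q * y i)
      (((1 + ‖x‖ ^ 2) ^ q) • (EuclideanSpace.proj i)
        + (x i) • ((q * (1 + ‖x‖ ^ 2) ^ (q - 1)) • ((2:ℕ) • (innerSL ℝ x)))) x :=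
  (hasFDerivAt_one_add_normsq_rpow q x).mul ((EuclideanSpace.proj (𝕜 := ℝ) i).hasFDerivAt)

lemma pderiv_F (q : ℝ) (i : Fin n) (x : EuclideanSpace ℝ (Fin n)) :
    pderiv' (fun y => (1 + ‖y‖ ^ 2) ^ q * y i) i x
      = (1 + ‖x‖ ^ 2) ^ q + q * (1 + ‖x‖ ^ 2) ^ (q - 1) * (2 * (x i) ^ 2) := by
  rw [pderiv', (hasFDerivAt_F q i x).fderiv]
  simp [eval_single, EuclideanSpace.proj]
  ring

lemma pderiv_const_mul (c : ℝ) (f : EuclideanSpace ℝ (Fin n) → ℝ)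
    (i : Fin n) (x : EuclideanSpace ℝ (Fin n)) (hf : DifferentiableAt ℝ f x) :
    pderiv' (fun y => c * f y) i x = c * pderiv' f i x := by
  rw [pderiv', fderiv_const_mul hf, ContinuousLinearMap.smul_apply, smul_eq_mul, pderiv']

lemma sum_sq (x : EuclideanSpace ℝ (Fin n)) : ∑ i : Fin n, (x i) ^ 2 = ‖x‖ ^ 2 := by
  rw [EuclideanSpace.norm_eq, Real.sq_sqrt (by positivity)]
  simp [Real.norm_eq_abs, sq_abs]

/-- For `n ≥ 4`, `h(x) = (1+|x|²)^{-(2n-5)/2}` and `σ(x) = (1+|x|²)^{(n-3)/2}`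
satisfy `σ · div(h ∇σ) ≥ 0` on `ℝⁿ`. -/
theorem sigma_div_h_grad_sigma_nonneg (n : ℕ) (hn : 4 ≤ n) :
    let h : EuclideanSpace ℝ (Fin n) → ℝ :=
      fun x => (1 + ‖x‖ ^ 2) ^ (-(2 * (n : ℝ) - 5) / 2)
    let σ : EuclideanSpace ℝ (Fin n) → ℝ :=
      fun x => (1 + ‖x‖ ^ 2) ^ (((n : ℝ) - 3) / 2)
    ∀ x : EuclideanSpace ℝ (Fin n),
      0 ≤ σ x * ∑ i : Fin n, pderiv' (fun y => h y * pderiv' σ i y) i x := by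
  intro h σ x
  set c : ℝ := (n : ℝ) - 3 with hc
  set q : ℝ := -(n : ℝ) / 2 with hq
  have hn4 : (4:ℝ) ≤ (n:ℝ) := by exact_mod_cast hn
  have hcn : (0:ℝ) ≤ c := by rw [hc]; linarith
  have key : ∀ i : Fin n, (fun y => h y * pderiv' σ i y)
      = fun y => c * ((1 + ‖y‖ ^ 2) ^ q * y i) := by
    intro i
    funext y
    have hσ : pderiv' σ i y
        = (((n:ℝ) - 3)/2) * (1 + ‖y‖ ^ 2) ^ ((((n:ℝ) - 3)/2) - 1) * (2 * y i) :=
      pderiv_pow _ i y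
    rw [hσ]
    have e1 : h y * (1 + ‖y‖ ^ 2) ^ ((((n:ℝ) - 3)/2) - 1) = (1 + ‖y‖ ^ 2) ^ q := by
      show (1 + ‖y‖ ^ 2) ^ (-(2 * (n : ℝ) - 5) / 2) * _ = _
      rw [← Real.rpow_add (gpos y)]
      congr 1
      rw [hq]; ring
    calc h y * ((((n:ℝ) - 3)/2) * (1 + ‖y‖ ^ 2) ^ ((((n:ℝ) - 3)/2) - 1) * (2 * y i))
        = ((n:ℝ) - 3) * ((h y * (1 + ‖y‖ ^ 2) ^ ((((n:ℝ) - 3)/2) - 1)) * y i) := by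
          ring
      _ = c * ((1 + ‖y‖ ^ 2) ^ q * y i) := by rw [e1, hc]
  have sumval : ∑ i : Fin n, pderiv' (fun y => h y * pderiv' σ i y) i x
      = c * ((n:ℝ) * (1 + ‖x‖ ^ 2) ^ q
          + q * (1 + ‖x‖ ^ 2) ^ (q - 1) * (2 * ‖x‖ ^ 2)) := by
    have : ∀ i : Fin n, pderiv' (fun y => h y * pderiv' σ i y) i x
        = c * ((1 + ‖x‖ ^ 2) ^ q + q * (1 + ‖x‖ ^ 2) ^ (q - 1) * (2 * (x i) ^ 2)) := by
      intro i
      rw [key i, pderiv_const_mul c _ i x (hasFDerivAt_F q i x).differentiableAt,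
        pderiv_F]
    rw [Finset.sum_congr rfl (fun i _ => this i), ← Finset.mul_sum, Finset.sum_add_distrib,
      Finset.sum_const]
    simp only [Finset.card_univ, Fintype.card_fin, nsmul_eq_mul]
    congr 1
    congr 1
    calc ∑ i : Fin n, q * (1 + ‖x‖ ^ 2) ^ (q - 1) * (2 * x i ^ 2)
        = (q * (1 + ‖x‖ ^ 2) ^ (q - 1) * 2) * ∑ i : Fin n, (x i) ^ 2 := by
          rw [Finset.mul_sum]
          exact Finset.sum_congr rfl fun i _ => by ring
      _ = q * (1 + ‖x‖ ^ 2) ^ (q - 1) * (2 * ‖x‖ ^ 2) := by rw [sum_sq x]; ring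
  rw [sumval]
  have ht : (0:ℝ) ≤ (1 + ‖x‖ ^ 2) ^ (q - 1) := (Real.rpow_pos_of_pos (gpos x) _).le
  have hσx : (0:ℝ) ≤ σ x := (Real.rpow_pos_of_pos (gpos x) _).le
  apply mul_nonneg hσx
  have eG : (1 + ‖x‖ ^ 2) ^ q = (1 + ‖x‖ ^ 2) ^ (q - 1) * (1 + ‖x‖ ^ 2) := by
    rw [← Real.rpow_add_one (gpos x).ne' (q - 1)]
    congr 1
    ring
  rw [eG]
  have expand : c * ((n:ℝ) * ((1 + ‖x‖ ^ 2) ^ (q - 1) * (1 + ‖x‖ ^ 2))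
      + q * (1 + ‖x‖ ^ 2) ^ (q - 1) * (2 * ‖x‖ ^ 2))
      = c * ((n:ℝ) * (1 + ‖x‖ ^ 2) ^ (q - 1)) := by
    rw [hq]; ring
  rw [expand]
  exact mul_nonneg hcn (mul_nonneg (Nat.cast_nonneg n) ht)
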